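/- Let λ > 0, and let R : [0,∞) → ℝ^{n×n}, S : [0,∞) → ℝ^{n×s}, B : [0,∞) → ℝ^{n×n} be continuous and bounded, with R(t) positive semidefinite for all t. Suppose p̃ : [0,∞) → ℝⁿ, r̃ : [0,∞) → ℝ^s, d̃ : [0,∞) → ℝⁿ are C¹ and satisfy ṗ̃ = −(R + λ I_n) p̃ − S r̃ + B^⊤ d̃, ṙ̃ = S^⊤ p̃, and ḋ̃ = −B p̃. Then lim_{t→∞} p̃(t) = 0. -/

import Mathlib

open Matrix




lemma barbalat {g : ℝ → ℝ} {K C : ℝ} (hK : 0 < K)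
    (hg0 : ∀ t, 0 ≤ g t)
    (hcont : ContinuousOn g (Set.Ici 0))
    (hlip : ∀ a ∈ Set.Ici (0:ℝ), ∀ b ∈ Set.Ici (0:ℝ), |g a - g b| ≤ K * |a - b|)
    (hint : ∀ T, 0 ≤ T → (∫ t in (0:ℝ)..T, g t) ≤ C) :
    Filter.Tendsto g Filter.atTop (nhds 0) := by
  have hii : ∀ a b : ℝ, 0 ≤ a → 0 ≤ b → IntervalIntegrable g MeasureTheory.volume a b := by
    intro a b ha hb
    refine (hcont.mono ?_).intervalIntegrable
    intro x hx
    rcases le_total a b with h | h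
    · rw [Set.uIcc_of_le h] at hx; exact le_trans ha hx.1
    · rw [Set.uIcc_of_ge h] at hx; exact le_trans hb hx.1
  set F : ℝ → ℝ := fun T => ∫ t in (0:ℝ)..(max T 0), g t with hF
  have hFmono : Monotone F := by
    intro a b hab
    have h1 : (0:ℝ) ≤ max a 0 := le_max_right _ _
    have h2 : max a 0 ≤ max b 0 := max_le_max hab le_rfl
    have hadd := intervalIntegral.integral_add_adjacent_intervals
      (hii 0 (max a 0) le_rfl h1) (hii (max a 0) (max b 0) h1 (le_trans h1 h2))
    have hnn : 0 ≤ ∫ t in (max a 0)..(max b 0), g t :=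
      intervalIntegral.integral_nonneg h2 (fun x _ => hg0 x)
    simp only [hF]
    linarith [hadd]
  have hFbdd : BddAbove (Set.range F) := by
    refine ⟨C, ?_⟩
    rintro x ⟨T, rfl⟩
    exact hint (max T 0) (le_max_right _ _)
  have hFlim : Filter.Tendsto F Filter.atTop (nhds (⨆ T, F T)) :=
    tendsto_atTop_ciSup hFmono hFbdd
  set L := ⨆ T, F T
  rw [Metric.tendsto_atTop]
  intro ε hε
  set δ : ℝ := ε / (2 * K) with hδ
  have hδpos : 0 < δ := by positivity
  have h1 : ∀ᶠ t in Filter.atTop, |F t - L| < δ * ε / 8 := by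
    have := Metric.tendsto_atTop.mp hFlim (δ * ε / 8) (by positivity)
    obtain ⟨N, hN⟩ := this
    filter_upwards [Filter.eventually_ge_atTop N] with t ht
    simpa [Real.dist_eq] using hN t ht
  have h2 : ∀ᶠ t in Filter.atTop, |F (t + δ) - L| < δ * ε / 8 := by
    have hshift : Filter.Tendsto (fun t : ℝ => t + δ) Filter.atTop Filter.atTop :=
      Filter.tendsto_atTop_add_const_right _ _ Filter.tendsto_id
    exact hshift.eventually h1
  have h3 : ∀ᶠ t in Filter.atTop, (0:ℝ) ≤ t := Filter.eventually_ge_atTop 0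
  rw [Metric.tendsto_atTop] at hFlim
  obtain ⟨N, hN⟩ := ((h1.and h2).and h3).exists_forall_of_atTop
  refine ⟨N, fun t ht => ?_⟩
  obtain ⟨⟨ht1, ht2⟩, ht0⟩ := hN t ht
  -- F (t+δ) - F t = ∫ t..t+δ g
  have hFt : F t = ∫ u in (0:ℝ)..t, g u := by simp [hF, max_eq_left ht0]
  have hFtδ : F (t + δ) = ∫ u in (0:ℝ)..(t+δ), g u := by
    simp [hF, max_eq_left (by linarith : (0:ℝ) ≤ t + δ)]
  have hadd := intervalIntegral.integral_add_adjacent_intervals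
    (hii 0 t le_rfl ht0) (hii t (t+δ) ht0 (by linarith))
  have hwin : (∫ u in t..(t+δ), g u) = F (t+δ) - F t := by
    rw [hFt, hFtδ]; linarith [hadd]
  -- lower bound for the window integral
  have hlb : δ * g t - K * (δ^2/2) ≤ ∫ u in t..(t+δ), g u := by
    have hmono : (∫ u in t..(t+δ), (g t - K * (u - t))) ≤ ∫ u in t..(t+δ), g u := by
      apply intervalIntegral.integral_mono_on (by linarith)
      · exact Continuous.intervalIntegrable (by fun_prop) _ _
      · exact hii t (t+δ) ht0 (by linarith)
      · intro x hx
        have hx0 : (0:ℝ) ≤ x := le_trans ht0 hx.1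
        have := hlip t ht0 x hx0
        have habs : |t - x| = x - t := by
          rw [abs_sub_comm, abs_of_nonneg (by linarith [hx.1])]
        have := abs_le.mp this
        nlinarith [this.1, this.2]
    have hcomp : (∫ u in t..(t+δ), (g t - K * (u - t))) = δ * g t - K * (δ^2/2) := by
      rw [intervalIntegral.integral_sub (intervalIntegrable_const)
        (Continuous.intervalIntegrable (by fun_prop) _ _)]
      rw [intervalIntegral.integral_const, intervalIntegral.integral_const_mul]
      have h5 : (∫ u in t..(t+δ), (u - t)) = δ^2/2 := by
        rw [intervalIntegral.integral_comp_sub_right (fun u => u) t]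
        simp only [sub_self, add_sub_cancel_left, integral_id]
        ring
      rw [h5]
      simp only [smul_eq_mul, add_sub_cancel_left]
    linarith [hmono, hcomp.symm.le]
  have hFdiff : F (t+δ) - F t < δ * ε / 4 := by
    have : |F (t+δ) - F t| < δ*ε/4 := by
      calc |F (t+δ) - F t| ≤ |F (t+δ) - L| + |F t - L| := by
            have := abs_sub_abs_le_abs_sub (F (t+δ) - L) (F t - L)
            calc |F (t+δ) - F t| = |(F (t+δ) - L) - (F t - L)| := by ring_nf
              _ ≤ |F (t+δ) - L| + |F t - L| := abs_sub _ _
        _ < δ*ε/8 + δ*ε/8 := by linarith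
        _ = δ*ε/4 := by ring
    linarith [abs_lt.mp this]
  -- combine
  have hKδ : K * δ = ε / 2 := by rw [hδ, mul_div_assoc', mul_comm 2 K, mul_div_mul_left _ _ hK.ne']
  have : δ * g t < δ * ε / 4 + K * (δ^2/2) := by linarith [hwin ▸ hlb]
  have hgt : g t < ε/4 + ε/4 := by
    have h4 : K * (δ^2/2) = (ε/4) * δ := by
      have : K * δ = ε/2 := hKδ
      nlinarith
    rw [h4] at this
    have := (mul_lt_mul_iff_right₀ hδpos).mp (by linarith : δ * g t < δ * (ε/4 + ε/4))
    linarith [this]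
  rw [Real.dist_eq, sub_zero, abs_of_nonneg (hg0 t)]
  linarith

lemma dot_self_nonneg' {m : ℕ} (x : Fin m → ℝ) : 0 ≤ x ⬝ᵥ x :=
  Finset.sum_nonneg fun i _ => mul_self_nonneg _

lemma sq_le_dot_self' {m : ℕ} (x : Fin m → ℝ) (i : Fin m) : x i ^ 2 ≤ x ⬝ᵥ x := by
  have : x i * x i ≤ ∑ j, x j * x j :=
    Finset.single_le_sum (fun j _ => mul_self_nonneg (x j)) (Finset.mem_univ i)
  simpa [dotProduct, sq] using this

lemma hasDeriv_dot {m : ℕ} {f : ℝ → Fin m → ℝ} {v : Fin m → ℝ} {sset : Set ℝ} {t : ℝ}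
    (hf : HasDerivWithinAt f v sset t) :
    HasDerivWithinAt (fun τ => f τ ⬝ᵥ f τ) (2 * (f t ⬝ᵥ v)) sset t := by
  have hc := hasDerivWithinAt_pi.mp hf
  have hsum : HasDerivWithinAt (fun τ => ∑ i, f τ i * f τ i)
      (∑ i, (v i * f t i + f t i * v i)) sset t :=
    HasDerivWithinAt.fun_sum fun i _ => (hc i).mul (hc i)
  have heq : (∑ i, (v i * f t i + f t i * v i)) = 2 * (f t ⬝ᵥ v) := by
    simp only [dotProduct, Finset.mul_sum]
    congr 1; ext i; ring
  rw [← heq]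
  exact hsum

lemma dot_transpose' {a b : ℕ} (M : Matrix (Fin a) (Fin b) ℝ) (x : Fin a → ℝ) (y : Fin b → ℝ) :
    x ⬝ᵥ (M *ᵥ y) = y ⬝ᵥ (Mᵀ *ᵥ x) := by
  rw [Matrix.dotProduct_mulVec, dotProduct_comm, Matrix.mulVec_transpose]

lemma dot_abs_bound {m : ℕ} (x y : Fin m → ℝ) (a M : ℝ) (ha : 0 ≤ a)
    (hx : ∀ i, |x i| ≤ a) (hy : ∀ i, |y i| ≤ M) : |x ⬝ᵥ y| ≤ m * (a * M) := by
  calc |x ⬝ᵥ y| ≤ ∑ i, |x i * y i| := Finset.abs_sum_le_sum_abs _ _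
    _ ≤ ∑ _i : Fin m, a * M := Finset.sum_le_sum fun i _ => by
        rw [abs_mul]; exact mul_le_mul (hx i) (hy i) (abs_nonneg _) ha
    _ = m * (a * M) := by simp [Finset.sum_const, nsmul_eq_mul]

lemma mulVec_entry_bound {a b : ℕ} (M : Matrix (Fin a) (Fin b) ℝ) (x : Fin b → ℝ) (c d : ℝ)
    (hc : 0 ≤ c) (hM : ∀ i j, |M i j| ≤ c) (hx : ∀ j, |x j| ≤ d) (i : Fin a) :
    |(M *ᵥ x) i| ≤ b * (c * d) := by
  calc |(M *ᵥ x) i| = |∑ j, M i j * x j| := by simp [Matrix.mulVec, dotProduct]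
    _ ≤ ∑ j, |M i j * x j| := Finset.abs_sum_le_sum_abs _ _
    _ ≤ ∑ _j : Fin b, c * d := Finset.sum_le_sum fun j _ => by
        rw [abs_mul]; exact mul_le_mul (hM i j) (hx j) (abs_nonneg _) hc
    _ = b * (c * d) := by simp [Finset.sum_const, nsmul_eq_mul]

theorem stmt11_main {n s : ℕ} (lam : ℝ) (hlam : 0 < lam)
    (R : ℝ → Matrix (Fin n) (Fin n) ℝ)
    (hRcont : ∀ i j : Fin n, ContinuousOn (fun t => R t i j) (Set.Ici 0))
    (hRbdd : ∃ c : ℝ, ∀ t ∈ Set.Ici (0:ℝ), ∀ i j : Fin n, |R t i j| ≤ c)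
    (hRpsd : ∀ t ∈ Set.Ici (0:ℝ), ∀ x : Fin n → ℝ, 0 ≤ x ⬝ᵥ (R t *ᵥ x))
    (S : ℝ → Matrix (Fin n) (Fin s) ℝ)
    (hScont : ∀ (i : Fin n) (j : Fin s), ContinuousOn (fun t => S t i j) (Set.Ici 0))
    (hSbdd : ∃ c : ℝ, ∀ t ∈ Set.Ici (0:ℝ), ∀ (i : Fin n) (j : Fin s), |S t i j| ≤ c)
    (B : ℝ → Matrix (Fin n) (Fin n) ℝ)
    (hBcont : ∀ i j : Fin n, ContinuousOn (fun t => B t i j) (Set.Ici 0))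
    (hBbdd : ∃ c : ℝ, ∀ t ∈ Set.Ici (0:ℝ), ∀ i j : Fin n, |B t i j| ≤ c)
    (pt : ℝ → Fin n → ℝ) (rt : ℝ → Fin s → ℝ) (dt : ℝ → Fin n → ℝ)
    (hp : ∀ t ∈ Set.Ici (0:ℝ),
      HasDerivWithinAt pt
        (-((R t + lam • (1 : Matrix (Fin n) (Fin n) ℝ)) *ᵥ pt t)
          - S t *ᵥ rt t + (B t)ᵀ *ᵥ dt t) (Set.Ici 0) t)
    (hr : ∀ t ∈ Set.Ici (0:ℝ),
      HasDerivWithinAt rt ((S t)ᵀ *ᵥ pt t) (Set.Ici 0) t)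
    (hd : ∀ t ∈ Set.Ici (0:ℝ),
      HasDerivWithinAt dt (-(B t *ᵥ pt t)) (Set.Ici 0) t) :
    Filter.Tendsto pt Filter.atTop (nhds 0) := by
  classical
  obtain ⟨cR0, hcR0⟩ := hRbdd
  obtain ⟨cS0, hcS0⟩ := hSbdd
  obtain ⟨cB0, hcB0⟩ := hBbdd
  set cR := max cR0 0 with hcRdef
  set cS := max cS0 0 with hcSdef
  set cB := max cB0 0 with hcBdef
  have hcR : ∀ t ∈ Set.Ici (0:ℝ), ∀ i j, |R t i j| ≤ cR :=
    fun t ht i j => le_trans (hcR0 t ht i j) (le_max_left _ _)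
  have hcS : ∀ t ∈ Set.Ici (0:ℝ), ∀ i j, |S t i j| ≤ cS :=
    fun t ht i j => le_trans (hcS0 t ht i j) (le_max_left _ _)
  have hcB : ∀ t ∈ Set.Ici (0:ℝ), ∀ i j, |B t i j| ≤ cB :=
    fun t ht i j => le_trans (hcB0 t ht i j) (le_max_left _ _)
  have hcRnn : 0 ≤ cR := le_max_right _ _
  have hcSnn : 0 ≤ cS := le_max_right _ _
  have hcBnn : 0 ≤ cB := le_max_right _ _
  set pd : ℝ → Fin n → ℝ := fun t =>
    -((R t + lam • (1 : Matrix (Fin n) (Fin n) ℝ)) *ᵥ pt t)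
      - S t *ᵥ rt t + (B t)ᵀ *ᵥ dt t with hpd
  set g : ℝ → ℝ := fun t => pt t ⬝ᵥ pt t with hg
  set V : ℝ → ℝ := fun t => pt t ⬝ᵥ pt t + rt t ⬝ᵥ rt t + dt t ⬝ᵥ dt t with hV
  set Vd : ℝ → ℝ := fun t => -(2 * (pt t ⬝ᵥ (R t *ᵥ pt t))) - 2 * lam * g t with hVd
  -- derivative of V
  have hVderiv : ∀ t ∈ Set.Ici (0:ℝ), HasDerivWithinAt V (Vd t) (Set.Ici 0) t := by
    intro t ht
    have h1 := hasDeriv_dot (hp t ht)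
    have h2 := hasDeriv_dot (hr t ht)
    have h3 := hasDeriv_dot (hd t ht)
    have hsum := (h1.add h2).add h3
    have heq : 2 * (pt t ⬝ᵥ (-((R t + lam • (1 : Matrix (Fin n) (Fin n) ℝ)) *ᵥ pt t)
          - S t *ᵥ rt t + (B t)ᵀ *ᵥ dt t))
        + 2 * (rt t ⬝ᵥ ((S t)ᵀ *ᵥ pt t)) + 2 * (dt t ⬝ᵥ (-(B t *ᵥ pt t))) = Vd t := by
      rw [← dot_transpose' (S t) (pt t) (rt t)]
      rw [dotProduct_neg, dot_transpose' (B t) (dt t) (pt t)]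
      simp only [hVd, hg, Matrix.add_mulVec, Matrix.smul_mulVec, Matrix.one_mulVec,
        dotProduct_add, dotProduct_sub, dotProduct_neg,
        dotProduct_smul, smul_eq_mul]
      ring
    rw [← heq]
    exact hsum
  -- continuity of coordinates
  have hptc : ∀ i, ContinuousOn (fun t => pt t i) (Set.Ici 0) :=
    fun i t ht => ((hasDerivWithinAt_pi.mp (hp t ht)) i).continuousWithinAt
  have hgc : ContinuousOn g (Set.Ici 0) :=
    fun t ht => (hasDeriv_dot (hp t ht)).continuousWithinAt
  have hVc : ContinuousOn V (Set.Ici 0) :=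
    fun t ht => (hVderiv t ht).continuousWithinAt
  have hdotc : ContinuousOn (fun t => pt t ⬝ᵥ (R t *ᵥ pt t)) (Set.Ici 0) := by
    have hre : (fun t => pt t ⬝ᵥ (R t *ᵥ pt t))
        = fun t => ∑ i, pt t i * ∑ j, R t i j * pt t j := by
      funext t; simp [dotProduct, Matrix.mulVec]
    rw [hre]
    exact continuousOn_finset_sum _ fun i _ => (hptc i).mul
      (continuousOn_finset_sum _ fun j _ => (hRcont i j).mul (hptc j))
  have hVdc : ContinuousOn Vd (Set.Ici 0) :=
    ((continuousOn_const.mul hdotc).neg).sub (continuousOn_const.mul hgc)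
  -- integrability helpers
  have hsub : ∀ T : ℝ, 0 ≤ T → Set.uIcc (0:ℝ) T ⊆ Set.Ici 0 := by
    intro T hT x hx
    rw [Set.uIcc_of_le hT] at hx; exact hx.1
  -- FTC
  have hFTC : ∀ T, 0 ≤ T → (∫ τ in (0:ℝ)..T, Vd τ) = V T - V 0 := by
    intro T hT
    apply intervalIntegral.integral_eq_sub_of_hasDeriv_right_of_le hT
    · exact hVc.mono fun x hx => hx.1
    · intro x hx
      exact (hVderiv x (le_of_lt hx.1)).mono fun y hy => le_of_lt (lt_trans hx.1 hy)
    · exact (hVdc.mono (hsub T hT)).intervalIntegrable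
  have hVnn : ∀ t, 0 ≤ V t := fun t =>
    add_nonneg (add_nonneg (dot_self_nonneg' _) (dot_self_nonneg' _)) (dot_self_nonneg' _)
  have hVdnp : ∀ t ∈ Set.Ici (0:ℝ), Vd t ≤ 0 := by
    intro t ht
    have h1 := hRpsd t ht (pt t)
    have h2 : 0 ≤ g t := dot_self_nonneg' _
    simp only [hVd]
    nlinarith
  -- V T ≤ V 0
  have hVle : ∀ T ∈ Set.Ici (0:ℝ), V T ≤ V 0 := by
    intro T hT
    have h1 : (∫ τ in (0:ℝ)..T, Vd τ) ≤ 0 := by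
      have h0 : 0 ≤ ∫ τ in (0:ℝ)..T, -Vd τ :=
        intervalIntegral.integral_nonneg hT (fun u hu => neg_nonneg.mpr (hVdnp u hu.1))
      rw [intervalIntegral.integral_neg] at h0
      linarith
    linarith [hFTC T hT]
  -- integral bound on g
  have hgint : ∀ T, 0 ≤ T → (∫ τ in (0:ℝ)..T, g τ) ≤ V 0 / (2 * lam) := by
    intro T hT
    have hmono : (∫ τ in (0:ℝ)..T, 2 * lam * g τ) ≤ ∫ τ in (0:ℝ)..T, -Vd τ := by
      apply intervalIntegral.integral_mono_on hT
      · exact ((continuousOn_const.mul hgc).mono (hsub T hT)).intervalIntegrable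
      · exact ((hVdc.neg).mono (hsub T hT)).intervalIntegrable
      · intro x hx
        have h1 := hRpsd x hx.1 (pt x)
        simp only [hVd]
        nlinarith
    rw [intervalIntegral.integral_const_mul] at hmono
    rw [intervalIntegral.integral_neg, hFTC T hT] at hmono
    have h2 : 2 * lam * (∫ τ in (0:ℝ)..T, g τ) ≤ V 0 := by
      have := hVnn T; linarith
    rw [le_div_iff₀ (by positivity : (0:ℝ) < 2 * lam)]
    linarith
  -- bounds on coordinates
  set a := Real.sqrt (V 0) with hadef
  have hann : 0 ≤ a := Real.sqrt_nonneg _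
  have habs_le : ∀ (x : ℝ), x ^ 2 ≤ V 0 → |x| ≤ a := by
    intro x hx
    rw [hadef, ← Real.sqrt_sq_eq_abs]
    exact Real.sqrt_le_sqrt hx
  have hpbd : ∀ t ∈ Set.Ici (0:ℝ), ∀ i, |pt t i| ≤ a := by
    intro t ht i
    apply habs_le
    have h1 := sq_le_dot_self' (pt t) i
    have h2 := hVle t ht
    have h3 := dot_self_nonneg' (rt t)
    have h4 := dot_self_nonneg' (dt t)
    have h5 : V t = pt t ⬝ᵥ pt t + rt t ⬝ᵥ rt t + dt t ⬝ᵥ dt t := rfl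
    linarith
  have hrbd : ∀ t ∈ Set.Ici (0:ℝ), ∀ i, |rt t i| ≤ a := by
    intro t ht i
    apply habs_le
    have h1 := sq_le_dot_self' (rt t) i
    have h2 := hVle t ht
    have h3 := dot_self_nonneg' (pt t)
    have h4 := dot_self_nonneg' (dt t)
    have h5 : V t = pt t ⬝ᵥ pt t + rt t ⬝ᵥ rt t + dt t ⬝ᵥ dt t := rfl
    linarith
  have hdbd : ∀ t ∈ Set.Ici (0:ℝ), ∀ i, |dt t i| ≤ a := by
    intro t ht i
    apply habs_le
    have h1 := sq_le_dot_self' (dt t) i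
    have h2 := hVle t ht
    have h3 := dot_self_nonneg' (pt t)
    have h4 := dot_self_nonneg' (rt t)
    have h5 : V t = pt t ⬝ᵥ pt t + rt t ⬝ᵥ rt t + dt t ⬝ᵥ dt t := rfl
    linarith
  -- bound on pd entries
  set M : ℝ := n * (cR * a) + lam * a + s * (cS * a) + n * (cB * a) with hMdef
  have hMnn : 0 ≤ M := by positivity
  have hpdbd : ∀ t ∈ Set.Ici (0:ℝ), ∀ i, |pd t i| ≤ M := by
    intro t ht i
    have h1 : |(R t *ᵥ pt t) i| ≤ n * (cR * a) :=
      mulVec_entry_bound _ _ _ _ hcRnn (hcR t ht) (hpbd t ht) i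
    have h2 : |(S t *ᵥ rt t) i| ≤ s * (cS * a) :=
      mulVec_entry_bound _ _ _ _ hcSnn (hcS t ht) (hrbd t ht) i
    have h3 : |((B t)ᵀ *ᵥ dt t) i| ≤ n * (cB * a) :=
      mulVec_entry_bound _ _ _ _ hcBnn (fun i j => hcB t ht j i) (hdbd t ht) i
    have h4 : |lam * pt t i| ≤ lam * a := by
      rw [abs_mul, abs_of_pos hlam]
      exact mul_le_mul_of_nonneg_left (hpbd t ht i) (le_of_lt hlam)
    have h5 : pd t i = -((R t *ᵥ pt t) i + lam * pt t i) - (S t *ᵥ rt t) i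
        + ((B t)ᵀ *ᵥ dt t) i := by
      simp [hpd, Matrix.add_mulVec, Matrix.smul_mulVec, Matrix.one_mulVec]
    rw [h5, hMdef]
    have := abs_add_le (-((R t *ᵥ pt t) i + lam * pt t i) - (S t *ᵥ rt t) i) (((B t)ᵀ *ᵥ dt t) i)
    have h6 := abs_sub (-((R t *ᵥ pt t) i + lam * pt t i)) ((S t *ᵥ rt t) i)
    have h7 := abs_add_le ((R t *ᵥ pt t) i) (lam * pt t i)
    rw [abs_neg] at h6
    linarith
  -- Lipschitz bound for g
  set K : ℝ := 2 * (n * (a * M)) + 1 with hKdef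
  have hKpos : 0 < K := by positivity
  have hgdbd : ∀ t ∈ Set.Ici (0:ℝ), ‖2 * (pt t ⬝ᵥ pd t)‖ ≤ K := by
    intro t ht
    rw [Real.norm_eq_abs, abs_mul, abs_two]
    have := dot_abs_bound (pt t) (pd t) a M hann (hpbd t ht) (hpdbd t ht)
    rw [hKdef]; linarith
  have hglip : ∀ x ∈ Set.Ici (0:ℝ), ∀ y ∈ Set.Ici (0:ℝ), |g x - g y| ≤ K * |x - y| := by
    intro x hx y hy
    have := Convex.norm_image_sub_le_of_norm_hasDerivWithin_le
      (f := g) (f' := fun t => 2 * (pt t ⬝ᵥ pd t)) (s := Set.Ici 0) (C := K)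
      (fun t ht => hasDeriv_dot (hp t ht)) hgdbd (convex_Ici 0) hy hx
    simpa [Real.norm_eq_abs] using this
  -- Barbalat
  have hgtend : Filter.Tendsto g Filter.atTop (nhds 0) :=
    barbalat hKpos (fun t => dot_self_nonneg' _) hgc hglip hgint
  -- conclude
  have hsqrt : Filter.Tendsto (fun t => Real.sqrt (g t)) Filter.atTop (nhds 0) := by
    have := (Real.continuous_sqrt.tendsto 0).comp hgtend
    simpa [Function.comp_def] using this
  apply squeeze_zero_norm _ hsqrt
  intro t
  rw [pi_norm_le_iff_of_nonneg (Real.sqrt_nonneg _)]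
  intro i
  rw [Real.norm_eq_abs, ← Real.sqrt_sq_eq_abs]
  exact Real.sqrt_le_sqrt (sq_le_dot_self' (pt t) i)


/-- for the error dynamics
`ṗ̃ = −(R + λI)p̃ − S r̃ + Bᵀ d̃`, `ṙ̃ = Sᵀ p̃`, `ḋ̃ = −B p̃`, with `R, S, B`
continuous and bounded and `R(t) ⪰ 0`, one has `p̃(t) → 0` as `t → ∞`. -/
theorem stmt11 {n s : ℕ} (lam : ℝ) (hlam : 0 < lam)
    (R : ℝ → Matrix (Fin n) (Fin n) ℝ)
    (hRcont : ∀ i j : Fin n, ContinuousOn (fun t => R t i j) (Set.Ici 0))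
    (hRbdd : ∃ c : ℝ, ∀ t ∈ Set.Ici (0:ℝ), ∀ i j : Fin n, |R t i j| ≤ c)
    (hRpsd : ∀ t ∈ Set.Ici (0:ℝ), ∀ x : Fin n → ℝ, 0 ≤ x ⬝ᵥ (R t *ᵥ x))
    (S : ℝ → Matrix (Fin n) (Fin s) ℝ)
    (hScont : ∀ (i : Fin n) (j : Fin s), ContinuousOn (fun t => S t i j) (Set.Ici 0))
    (hSbdd : ∃ c : ℝ, ∀ t ∈ Set.Ici (0:ℝ), ∀ (i : Fin n) (j : Fin s), |S t i j| ≤ c)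
    (B : ℝ → Matrix (Fin n) (Fin n) ℝ)
    (hBcont : ∀ i j : Fin n, ContinuousOn (fun t => B t i j) (Set.Ici 0))
    (hBbdd : ∃ c : ℝ, ∀ t ∈ Set.Ici (0:ℝ), ∀ i j : Fin n, |B t i j| ≤ c)
    (pt : ℝ → Fin n → ℝ) (rt : ℝ → Fin s → ℝ) (dt : ℝ → Fin n → ℝ)
    (hp : ∀ t ∈ Set.Ici (0:ℝ),
      HasDerivWithinAt pt
        (-((R t + lam • (1 : Matrix (Fin n) (Fin n) ℝ)) *ᵥ pt t)
          - S t *ᵥ rt t + (B t)ᵀ *ᵥ dt t) (Set.Ici 0) t)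
    (hr : ∀ t ∈ Set.Ici (0:ℝ),
      HasDerivWithinAt rt ((S t)ᵀ *ᵥ pt t) (Set.Ici 0) t)
    (hd : ∀ t ∈ Set.Ici (0:ℝ),
      HasDerivWithinAt dt (-(B t *ᵥ pt t)) (Set.Ici 0) t) :
    Filter.Tendsto pt Filter.atTop (nhds 0) := by
  exact stmt11_main lam hlam R hRcont hRbdd hRpsd S hScont hSbdd B hBcont hBbdd pt rt dt hp hr hd
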